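/- The Kanzow–Schwartz function φ_KS : ℝ² → ℝ is an or-compatible NCP-function: it is continuous, φ_KS(a,b) = 0 ⟺ (a ≥ 0 ∧ b ≥ 0 ∧ ab = 0), φ_KS(a,b) > 0 for all (a,b) ∈ A, and φ_KS(a,b) < 0 for all (a,b) ∈ B. -/

import Mathlib

noncomputable section

/-- The Kanzow–Schwartz function. -/
def phiKS (v : ℝ × ℝ) : ℝ :=
  if 0 ≤ v.1 + v.2 then v.1 * v.2 else -(v.1 ^ 2 + v.2 ^ 2) / 2

/-- The Kanzow–Schwartz function is an or-compatible NCP-function. -/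
theorem phiKS_orCompatible_NCP :
    Continuous phiKS ∧
    (∀ a b : ℝ, phiKS (a, b) = 0 ↔ 0 ≤ a ∧ 0 ≤ b ∧ a * b = 0) ∧
    (∀ a b : ℝ, 0 < a → 0 < b → 0 < phiKS (a, b)) ∧
    (∀ a b : ℝ, a < 0 ∨ b < 0 → phiKS (a, b) < 0) := by
  refine ⟨?_, ?_, ?_, ?_⟩
  · apply Continuous.if_le (continuous_fst.mul continuous_snd) (by continuity)
      continuous_const (continuous_fst.add continuous_snd)
    intro v hv
    have hb : v.2 = -v.1 := by simp only [Pi.add_apply] at hv; linarith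
    simp only [Pi.mul_apply, hb]; ring
  · intro a b
    unfold phiKS
    simp only
    split_ifs with h
    · constructor
      · intro hab
        rcases mul_eq_zero.mp hab with h0 | h0 <;>
          constructor <;> first | linarith | exact ⟨by linarith, by simp [h0, hab]⟩
      · exact fun h => h.2.2
    · constructor
      · intro h0
        have ha2 : a ^ 2 = 0 := by nlinarith [sq_nonneg a, sq_nonneg b]
        have hb2 : b ^ 2 = 0 := by nlinarith [sq_nonneg a, sq_nonneg b]
        have ha := (pow_eq_zero_iff two_ne_zero).mp ha2
        have hb := (pow_eq_zero_iff two_ne_zero).mp hb2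
        simp [ha, hb] at h
      · intro ⟨ha, hb, _⟩; linarith
  · intro a b ha hb
    unfold phiKS
    simp only
    rw [if_pos (by linarith)]
    positivity
  · intro a b hab
    unfold phiKS
    simp only
    split_ifs with h
    · rcases hab with h' | h' <;> nlinarith
    · rcases hab with h' | h' <;> nlinarith [sq_nonneg a, sq_nonneg b]
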